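/- Let A be a family of meager subsets of a separable metrizable space X. If the cardinality of A is strictly less than add(M), the additivity of the meager ideal on the real line, then the union ⋃A is meager in X. -/

import Mathlib

open Set Metric

variable {M : Type*} [MetricSpace M]


lemma cand_in_open (D : Set M) (Dd : Dense D)
    (U : Set M) (hUo : IsOpen U) (hiso : ∀ x ∈ U, ¬IsOpen ({x} : Set M))
    (ε : ℝ) (hε : 0 < ε) (p : M) (hp : p ∈ U)
    (O : Set M) (hO : IsOpen O) (hOU : (O ∩ U).Nonempty) :
    ∃ d ∈ D, ∃ q : ℚ, 0 < (q:ℝ) ∧ (q:ℝ) ≤ ε/2 ∧ closedBall d (q:ℝ) ⊆ U ∧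
      3 * (q:ℝ) < dist d p ∧ ball d (q:ℝ) ⊆ O := by
  obtain ⟨x', hx'OU, hx'p⟩ : ∃ x', x' ∈ O ∩ U ∧ x' ≠ p := by
    by_contra h
    push_neg at h
    have hOUp : O ∩ U = {p} := by
      apply Subset.antisymm
      · intro z hz; exact h z hz
      · rintro z rfl
        rcases hOU with ⟨w, hw⟩
        have := h w hw; rwa [this] at hw
    exact hiso p hp (hOUp ▸ hO.inter hUo)
  -- radius r
  obtain ⟨r₀, hr₀, hball₀⟩ := Metric.isOpen_iff.mp (hO.inter hUo) x' hx'OU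
  have hdxp : 0 < dist x' p := dist_pos.mpr hx'p
  set r : ℝ := min (min r₀ ε) (dist x' p) with hr
  have hrpos : 0 < r := lt_min (lt_min hr₀ hε) hdxp
  have hrr₀ : r ≤ r₀ := le_trans (min_le_left _ _) (min_le_left _ _)
  have hrε : r ≤ ε := le_trans (min_le_left _ _) (min_le_right _ _)
  have hrd : r ≤ dist x' p := min_le_right _ _
  -- d ∈ D near x'
  obtain ⟨d, hdD, hdx'⟩ : ∃ d ∈ D, dist d x' < r/8 := by
    have : (ball x' (r/8)).Nonempty := ⟨x', mem_ball_self (by positivity)⟩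
    obtain ⟨d, hd1, hd2⟩ := Dd.exists_mem_open isOpen_ball this
    exact ⟨d, hd1, mem_ball.mp hd2⟩
  obtain ⟨q, hq1, hq2⟩ := exists_rat_btwn (show r/8 < r/4 by linarith)
  refine ⟨d, hdD, q, by linarith, by linarith, ?_, ?_, ?_⟩
  · intro z hz
    have : dist z x' ≤ dist z d + dist d x' := dist_triangle _ _ _
    have hz' : dist z d ≤ q := mem_closedBall.mp hz
    have : dist z x' < r := by linarith
    exact (hball₀ (mem_ball.mpr (lt_of_lt_of_le this hrr₀))).2
  · have : dist x' p ≤ dist x' d + dist d p := dist_triangle _ _ _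
    rw [dist_comm d x'] at hdx'
    linarith
  · intro z hz
    have : dist z x' ≤ dist z d + dist d x' := dist_triangle _ _ _
    have hz' : dist z d < q := mem_ball.mp hz
    have : dist z x' < r := by linarith
    exact (hball₀ (mem_ball.mpr (lt_of_lt_of_le this hrr₀))).1

lemma children_exists [TopologicalSpace.SeparableSpace M]
    (U : Set M) (hUo : IsOpen U) (hne : U.Nonempty)
    (hiso : ∀ x ∈ U, ¬IsOpen ({x} : Set M)) (ε : ℝ) (hε : 0 < ε) :
    ∃ V : ℕ → Set M, (∀ n, IsOpen (V n)) ∧ (∀ n, (V n).Nonempty) ∧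
      (∀ n, closure (V n) ⊆ U) ∧ (∀ n m, n ≠ m → V n ∩ V m = ∅) ∧
      (U ⊆ closure (⋃ n, V n)) ∧ (∀ n, ∀ x ∈ V n, ∀ y ∈ V n, dist x y ≤ ε) := by
  obtain ⟨D, Dct, Dd⟩ := TopologicalSpace.exists_countable_dense M
  obtain ⟨p, hp⟩ := hne
  -- candidates
  set Cand : Set (M × ℝ) := {c | c.1 ∈ D ∧ (∃ q : ℚ, (q:ℝ) = c.2) ∧ 0 < c.2 ∧ c.2 ≤ ε/2 ∧
      closedBall c.1 c.2 ⊆ U ∧ 3 * c.2 < dist c.1 p} with hCand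
  have candCt : Cand.Countable := by
    apply Set.Countable.mono _ (Dct.prod (Set.countable_range ((↑) : ℚ → ℝ)))
    rintro ⟨d, x⟩ ⟨h1, ⟨q, hq⟩, _⟩
    exact ⟨h1, ⟨q, hq⟩⟩
  have candO : ∀ O : Set M, IsOpen O → (O ∩ U).Nonempty →
      ∃ c ∈ Cand, ball c.1 c.2 ⊆ O := by
    intro O hO hOU
    obtain ⟨d, hdD, q, h1, h2, h3, h4, h5⟩ := cand_in_open D Dd U hUo hiso ε hε p hp O hO hOU
    exact ⟨(d, (q:ℝ)), ⟨hdD, ⟨q, rfl⟩, h1, h2, h3, h4⟩, h5⟩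
  -- Zorn
  set P : Set (Set (M × ℝ)) := {F | F ⊆ Cand ∧
      F.Pairwise (fun c c' => ball c.1 c.2 ∩ ball c'.1 c'.2 = ∅)} with hP
  obtain ⟨F, hFmax⟩ : ∃ F, Maximal (· ∈ P) F := by
    apply zorn_subset
    intro ch hch hchain
    refine ⟨⋃₀ ch, ⟨?_, ?_⟩, fun s hs => subset_sUnion_of_mem hs⟩
    · exact sUnion_subset (fun s hs => (hch hs).1)
    · rintro c ⟨F₁, hF₁, hc⟩ c' ⟨F₂, hF₂, hc'⟩ hne'
      rcases hchain.total hF₁ hF₂ with h | h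
      · exact (hch hF₂).2 (h hc) hc' hne'
      · exact (hch hF₁).2 hc (h hc') hne'
  obtain ⟨hFC, hFd⟩ := hFmax.prop
  have FCt : F.Countable := candCt.mono hFC
  -- maximality: every candidate's ball meets some member's ball
  have hmeet : ∀ c ∈ Cand, ∃ c' ∈ F, (ball c.1 c.2 ∩ ball c'.1 c'.2).Nonempty := by
    intro c hc
    by_cases hcF : c ∈ F
    · exact ⟨c, hcF, ⟨c.1, mem_ball_self hc.2.2.1, mem_ball_self hc.2.2.1⟩⟩
    by_contra h
    push_neg at h
    have : insert c F ∈ P := by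
      constructor
      · exact insert_subset hc hFC
      · intro a ha b hb hab
        rcases ha with rfl | ha <;> rcases hb with rfl | hb
        · exact absurd rfl hab
        · exact h b hb
        · rw [inter_comm]; exact h a ha
        · exact hFd ha hb hab
    exact hcF (hFmax.2 this (subset_insert _ _) (mem_insert c F))
  -- density
  have hdense : U ⊆ closure (⋃ c ∈ F, ball c.1 c.2) := by
    intro x hx
    rw [_root_.mem_closure_iff]
    intro O hO hxO
    obtain ⟨c, hc, hsub⟩ := candO O hO ⟨x, hxO, hx⟩
    obtain ⟨c', hc', y, hy1, hy2⟩ := hmeet c hc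
    exact ⟨y, hsub hy1, mem_biUnion hc' hy2⟩
  -- infinite
  have hinf : F.Infinite := by
    intro hfin
    have hcl : closure (⋃ c ∈ F, ball c.1 c.2) = ⋃ c ∈ F, closure (ball c.1 c.2) :=
      hfin.closure_biUnion _
    have hpc := hdense hp
    rw [hcl] at hpc
    obtain ⟨c, hcF, hpc⟩ := mem_iUnion₂.mp hpc
    have h1 : dist p c.1 ≤ c.2 :=
      mem_closedBall.mp (closure_ball_subset_closedBall hpc)
    have h2 := (hFC hcF).2.2.2.2.2
    have h3 := (hFC hcF).2.2.1
    rw [dist_comm] at h1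
    linarith
  -- enumerate
  haveI := FCt.to_subtype
  haveI := hinf.to_subtype
  obtain ⟨e⟩ : Nonempty (ℕ ≃ F) := by
    obtain ⟨d⟩ := nonempty_denumerable F
    exact ⟨(Denumerable.eqv F).symm⟩
  refine ⟨fun n => ball (e n).1.1 (e n).1.2, fun n => isOpen_ball,
    fun n => ⟨(e n).1.1, mem_ball_self (hFC (e n).2).2.2.1⟩,
    fun n => subset_trans closure_ball_subset_closedBall (hFC (e n).2).2.2.2.2.1,
    ?_, ?_, ?_⟩
  · intro n m hnm
    have : (e n).1 ≠ (e m).1 := by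
      intro h
      exact hnm (e.injective (Subtype.ext h))
    exact hFd (e n).2 (e m).2 this
  · refine hdense.trans (closure_mono ?_)
    intro y hy
    obtain ⟨c, hcF, hyc⟩ := mem_iUnion₂.mp hy
    refine mem_iUnion.mpr ⟨e.symm ⟨c, hcF⟩, ?_⟩
    simpa using hyc
  · intro n x hx y hy
    have h2 := (hFC (e n).2).2.2.2.1
    have htr := dist_triangle_right x y (e n).1.1
    rw [mem_ball] at hx hy
    linarith

structure MyScheme (M : Type*) [MetricSpace M] where
  W : List ℕ → Set M
  op : ∀ s, IsOpen (W s)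
  ne : ∀ s, (W s).Nonempty
  csub : ∀ n s, closure (W (n :: s)) ⊆ W s
  sib : ∀ n m s, n ≠ m → W (n :: s) ∩ W (m :: s) = ∅
  dns : ∀ s, W s ⊆ closure (⋃ n, W (n :: s))
  sml : ∀ n s, ∀ x ∈ W (n :: s), ∀ y ∈ W (n :: s), dist x y ≤ (1/2 : ℝ)^(s.length)

lemma scheme_exists [TopologicalSpace.SeparableSpace M] (U₀ : Set M) (h1 : IsOpen U₀)
    (h2 : U₀.Nonempty) (h3 : ∀ x ∈ U₀, ¬IsOpen ({x} : Set M)) :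
    ∃ σ : MyScheme M, σ.W [] = U₀ := by
  have key : ∀ (U : Set M) (lev : ℕ), ∃ V : ℕ → Set M,
      (IsOpen U ∧ U.Nonempty ∧ U ⊆ U₀) →
      ((∀ n, IsOpen (V n)) ∧ (∀ n, (V n).Nonempty) ∧ (∀ n, closure (V n) ⊆ U) ∧
      (∀ n m, n ≠ m → V n ∩ V m = ∅) ∧ (U ⊆ closure (⋃ n, V n)) ∧
      (∀ n, ∀ x ∈ V n, ∀ y ∈ V n, dist x y ≤ (1/2:ℝ)^lev)) := by
    intro U lev
    by_cases h : IsOpen U ∧ U.Nonempty ∧ U ⊆ U₀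
    · obtain ⟨V, p1, p2, p3, p4, p5, p6⟩ := children_exists U h.1 h.2.1
        (fun x hx => h3 x (h.2.2 hx)) ((1/2:ℝ)^lev) (by positivity)
      exact ⟨V, fun _ => ⟨p1, p2, p3, p4, p5, p6⟩⟩
    · exact ⟨fun _ => ∅, fun hh => absurd hh h⟩
  choose kid hkid using key
  let W : List ℕ → Set M := fun s =>
    List.rec U₀ (fun n s' ih => kid ih s'.length n) s
  have hWcons : ∀ n s, W (n :: s) = kid (W s) s.length n := fun n s => rfl
  have inv : ∀ s, IsOpen (W s) ∧ (W s).Nonempty ∧ W s ⊆ U₀ := by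
    intro s
    induction s with
    | nil => exact ⟨h1, h2, subset_rfl⟩
    | cons n s ih =>
      obtain ⟨p1, p2, p3, _, _, _⟩ := hkid (W s) s.length ih
      rw [hWcons]
      exact ⟨p1 n, p2 n, (subset_closure.trans (p3 n)).trans ih.2.2⟩
  refine ⟨⟨W, fun s => (inv s).1, fun s => (inv s).2.1,
    fun n s => ?_, fun n m s hnm => ?_, fun s => ?_, fun n s => ?_⟩, rfl⟩
  · rw [hWcons]; exact (hkid (W s) s.length (inv s)).2.2.1 n
  · rw [hWcons, hWcons]; exact (hkid (W s) s.length (inv s)).2.2.2.1 n m hnm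
  · exact (hkid (W s) s.length (inv s)).2.2.2.2.1
  · rw [hWcons]; exact (hkid (W s) s.length (inv s)).2.2.2.2.2 n

lemma MyScheme.mono (σ : MyScheme M) : ∀ {s t : List ℕ}, s <:+ t → σ.W t ⊆ σ.W s := by
  intro s t ⟨w, hw⟩
  subst hw
  induction w with
  | nil => exact subset_rfl
  | cons a w ih =>
    exact (subset_closure.trans (σ.csub a (w ++ s))).trans ih

lemma MyScheme.levdisj (σ : MyScheme M) : ∀ (s t : List ℕ), s.length = t.length →
    s ≠ t → σ.W s ∩ σ.W t = ∅ := by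
  intro s
  induction s with
  | nil =>
    intro t hl hne
    cases t with
    | nil => exact absurd rfl hne
    | cons m t => simp at hl
  | cons n s ih =>
    intro t hl hne
    cases t with
    | nil => simp at hl
    | cons m t =>
      simp only [List.length_cons, Nat.succ.injEq] at hl
      by_cases hst : s = t
      · subst hst
        have hnm : n ≠ m := fun h => hne (by rw [h])
        exact σ.sib n m s hnm
      · apply eq_empty_of_subset_empty
        calc σ.W (n :: s) ∩ σ.W (m :: t) ⊆ σ.W s ∩ σ.W t :=
              inter_subset_inter (subset_closure.trans (σ.csub n s))
                (subset_closure.trans (σ.csub m t))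
        _ = ∅ := ih t hl hst

lemma MyScheme.pibase (σ : MyScheme M) (s : List ℕ) (O : Set M) (hO : IsOpen O)
    (h : (O ∩ σ.W s).Nonempty) : ∃ t, s <:+ t ∧ σ.W t ⊆ O := by
  obtain ⟨x, hxO, hxW⟩ := h
  obtain ⟨r, hr, hball⟩ := Metric.isOpen_iff.mp hO x hxO
  have claim : ∀ j : ℕ, ∃ t, s <:+ t ∧ t.length = s.length + j ∧
      (σ.W t ∩ ball x (r/2)).Nonempty := by
    intro j
    induction j with
    | zero => exact ⟨s, List.suffix_rfl, rfl, ⟨x, hxW, mem_ball_self (by positivity)⟩⟩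
    | succ j ih =>
      obtain ⟨t, hst, hlen, ⟨y, hyW, hyB⟩⟩ := ih
      have hy' : y ∈ closure (⋃ n, σ.W (n :: t)) := σ.dns t hyW
      have hne : ((ball x (r/2)) ∩ ⋃ n, σ.W (n :: t)).Nonempty := by
        rw [_root_.mem_closure_iff] at hy'
        exact hy' _ isOpen_ball hyB
      obtain ⟨z, hz1, hz2⟩ := hne
      obtain ⟨n, hzn⟩ := mem_iUnion.mp hz2
      exact ⟨n :: t, hst.trans ⟨[n], rfl⟩, by simp only [List.length_cons, hlen]; omega, ⟨z, hzn, hz1⟩⟩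
  obtain ⟨j, hj⟩ : ∃ j : ℕ, (1/2:ℝ)^(s.length + j) < r/2 := by
    obtain ⟨k, hk⟩ := exists_pow_lt_of_lt_one (show (0:ℝ) < r/2 by positivity)
      (show (1/2:ℝ) < 1 by norm_num)
    refine ⟨k, lt_of_le_of_lt ?_ hk⟩
    exact pow_le_pow_of_le_one (by norm_num) (by norm_num) (by omega)
  obtain ⟨t, hst, hlen, ⟨y, hyW, hyB⟩⟩ := claim (j+1)
  refine ⟨t, hst, ?_⟩
  obtain ⟨n, t', rfl⟩ : ∃ n t', t = n :: t' := by
    cases t with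
    | nil => exact absurd hlen (by simp only [List.length_nil]; omega)
    | cons n t' => exact ⟨n, t', rfl⟩
  have hlen' : t'.length = s.length + j := by simp at hlen; omega
  intro w hw
  have hsml := σ.sml n t' w hw y hyW
  rw [hlen'] at hsml
  apply hball
  rw [mem_ball]
  have h1 : dist w x ≤ dist w y + dist y x := dist_triangle _ _ _
  have h2 : dist y x < r/2 := mem_ball.mp hyB
  linarith

/-- prefixes of a branch -/
def bpath (b : ℕ → ℕ) : ℕ → List ℕ
  | 0 => []
  | n+1 => b n :: bpath b n

@[simp] lemma bpath_length (b : ℕ → ℕ) (n : ℕ) : (bpath b n).length = n := by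
  induction n with
  | zero => rfl
  | succ n ih => simp [bpath, ih]

lemma bpath_suffix (b : ℕ → ℕ) {n m : ℕ} (h : n ≤ m) : bpath b n <:+ bpath b m := by
  induction m with
  | zero => have : n = 0 := by omega
            subst this; exact List.suffix_rfl
  | succ m ih =>
    rcases Nat.eq_or_lt_of_le h with rfl | hlt
    · exact List.suffix_rfl
    · exact (ih (by omega)).trans ⟨[b m], rfl⟩

def cylSet (s : List ℕ) : Set (ℕ → ℕ) := {b | bpath b s.length = s}

lemma mem_cylSet_bpath (b : ℕ → ℕ) (n : ℕ) : b ∈ cylSet (bpath b n) := by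
  simp [cylSet]

def MyScheme.tree (σ : MyScheme M) (N : Set M) : Set (ℕ → ℕ) :=
  {b | ∀ n, (closure (σ.W (bpath b n)) ∩ N).Nonempty}

def TNwd (C : Set (ℕ → ℕ)) : Prop := ∀ s : List ℕ, ∃ t, s <:+ t ∧ cylSet t ∩ C = ∅

def MyScheme.coset (σ : MyScheme M) (C : Set (ℕ → ℕ)) : Set M :=
  closure (σ.W []) \ ⋃ (s : List ℕ) (_ : cylSet s ∩ C = ∅), σ.W s

def MyScheme.junk (σ : MyScheme M) (s : List ℕ) : Set M := σ.W s \ ⋃ n, σ.W (n :: s)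

lemma MyScheme.tree_tnwd (σ : MyScheme M) {N : Set M} (hNc : IsClosed N)
    (hN : IsNowhereDense N) : TNwd (σ.tree N) := by
  intro s
  have hne : ((Nᶜ) ∩ σ.W s).Nonempty := by
    by_contra h
    rw [not_nonempty_iff_eq_empty] at h
    have hsub : σ.W s ⊆ N := by
      intro x hx
      by_contra hxN
      exact absurd (⟨x, hxN, hx⟩ : ((Nᶜ) ∩ σ.W s).Nonempty) (by rw [h]; exact not_nonempty_empty)
    have : σ.W s ⊆ interior (closure N) :=
      interior_maximal (hsub.trans subset_closure) (σ.op s) |>.trans subset_rfl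
    rw [hN] at this
    exact absurd (this (σ.ne s).some_mem) (notMem_empty _)
  obtain ⟨t', hst', hsub'⟩ := σ.pibase s _ hNc.isOpen_compl hne
  refine ⟨0 :: t', hst'.trans ⟨[0], rfl⟩, ?_⟩
  ext b
  simp only [mem_inter_iff, mem_empty_iff_false, iff_false, not_and]
  intro hcyl htree
  have h1 := htree ((0 : ℕ) :: t').length
  rw [hcyl] at h1
  obtain ⟨y, hy1, hy2⟩ := h1
  exact hsub' (σ.csub 0 t' hy1) hy2

lemma MyScheme.coset_closed (σ : MyScheme M) (C : Set (ℕ → ℕ)) : IsClosed (σ.coset C) := by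
  have : IsOpen (⋃ (s : List ℕ) (_ : cylSet s ∩ C = ∅), σ.W s) :=
    isOpen_iUnion (fun s => isOpen_iUnion (fun _ => σ.op s))
  exact isClosed_closure.inter this.isClosed_compl

lemma MyScheme.coset_nwd (σ : MyScheme M) {C : Set (ℕ → ℕ)} (hC : TNwd C) :
    IsNowhereDense (σ.coset C) := by
  rw [(σ.coset_closed C).isNowhereDense_iff]
  by_contra h
  obtain ⟨x, hx⟩ := nonempty_iff_ne_empty.mpr h
  have hxc : x ∈ σ.coset C := interior_subset hx
  have hOW : ((interior (σ.coset C)) ∩ σ.W []).Nonempty := by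
    have := hxc.1
    rw [_root_.mem_closure_iff] at this
    exact this _ isOpen_interior hx
  obtain ⟨t, _, hsub⟩ := σ.pibase [] _ isOpen_interior hOW
  obtain ⟨t₂, ht₂, hcyl⟩ := hC t
  obtain ⟨y, hy⟩ := σ.ne t₂
  have hy1 : y ∈ σ.coset C := interior_subset (hsub (σ.mono ht₂ hy))
  exact hy1.2 (mem_iUnion.mpr ⟨t₂, mem_iUnion.mpr ⟨hcyl, hy⟩⟩)

lemma MyScheme.junk_nwd (σ : MyScheme M) (s : List ℕ) : IsNowhereDense (σ.junk s) := by
  rw [IsNowhereDense]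
  by_contra h
  obtain ⟨x, hx⟩ := nonempty_iff_ne_empty.mpr h
  have hxcl : x ∈ closure (σ.junk s) := interior_subset hx
  have h1 : ((interior (closure (σ.junk s))) ∩ σ.junk s).Nonempty := by
    rw [_root_.mem_closure_iff] at hxcl
    exact hxcl _ isOpen_interior hx
  obtain ⟨y, hyO, hyj⟩ := h1
  have h2 : ((interior (closure (σ.junk s)) ∩ σ.W s) ∩ ⋃ n, σ.W (n :: s)).Nonempty := by
    have hy' := σ.dns s hyj.1
    rw [_root_.mem_closure_iff] at hy'
    exact hy' _ (isOpen_interior.inter (σ.op s)) ⟨hyO, hyj.1⟩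
  obtain ⟨z, ⟨hz1, _⟩, hz2⟩ := h2
  obtain ⟨n, hzn⟩ := mem_iUnion.mp hz2
  have hz3 : z ∈ closure (σ.junk s) := interior_subset hz1
  rw [_root_.mem_closure_iff] at hz3
  obtain ⟨w, hw1, hw2⟩ := hz3 _ (σ.op (n :: s)) hzn
  exact hw2.2 (mem_iUnion.mpr ⟨n, hw1⟩)

lemma MyScheme.branch_or_junk (σ : MyScheme M) (x : M) (hx : x ∈ σ.W []) :
    (∃ b : ℕ → ℕ, ∀ n, x ∈ σ.W (bpath b n)) ∨ (∃ s, x ∈ σ.junk s) := by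
  classical
  by_cases hj : ∃ s, x ∈ σ.junk s
  · exact Or.inr hj
  left
  push_neg at hj
  have step : ∀ s, x ∈ σ.W s → ∃ n, x ∈ σ.W (n :: s) := by
    intro s hs
    have := hj s
    rw [MyScheme.junk, mem_diff] at this
    push_neg at this
    exact mem_iUnion.mp (this hs)
  let L : ℕ → List ℕ := fun k => Nat.rec []
    (fun _ ih => if h : ∃ n, x ∈ σ.W (n :: ih) then h.choose :: ih else ih) k
  have hstep : ∀ k (h : ∃ n, x ∈ σ.W (n :: L k)), L (k+1) = h.choose :: L k := by
    intro k h
    show (if h' : ∃ n, x ∈ σ.W (n :: L k) then h'.choose :: L k else L k) = _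
    rw [dif_pos h]
  have inv : ∀ k, x ∈ σ.W (L k) := by
    intro k
    induction k with
    | zero => exact hx
    | succ k ih =>
      have hex := step (L k) ih
      rw [hstep k hex]
      exact hex.choose_spec
  refine ⟨fun n => (L (n+1)).headI, ?_⟩
  have hpath : ∀ n, bpath (fun n => (L (n+1)).headI) n = L n := by
    intro n
    induction n with
    | zero => rfl
    | succ n ih =>
      have hex := step (L n) (inv n)
      have h1 : L (n+1) = hex.choose :: L n := hstep n hex
      show (L (n+1)).headI :: bpath _ n = L (n+1)
      rw [ih, h1]
      rfl
  exact fun n => (hpath n) ▸ inv n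

lemma MyScheme.branch_prefix (σ : MyScheme M) {x : M} {s : List ℕ} {b : ℕ → ℕ}
    (hx : x ∈ σ.W s) (hb : ∀ n, x ∈ σ.W (bpath b n)) : s = bpath b s.length := by
  by_contra hne
  have hd := σ.levdisj s (bpath b s.length) (by simp) hne
  have hmem : x ∈ σ.W s ∩ σ.W (bpath b s.length) := ⟨hx, hb s.length⟩
  rw [hd] at hmem
  exact absurd hmem (notMem_empty x)

lemma MyScheme.limit_point [CompleteSpace M] (σ : MyScheme M) (b : ℕ → ℕ) :
    ∃ x, ∀ n, x ∈ closure (σ.W (bpath b n)) := by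
  have hchoice : ∀ n, (σ.W (bpath b n)).Nonempty := fun n => σ.ne _
  choose pf hpf using hchoice
  have hmem : ∀ {n m : ℕ}, n ≤ m → pf m ∈ σ.W (bpath b n) :=
    fun {n m} h => σ.mono (bpath_suffix b h) (hpf m)
  set C : ℝ := dist (pf 0) (pf 1) + 2 with hC
  have hC2 : (2:ℝ) ≤ C := by have := dist_nonneg (x := pf 0) (y := pf 1); linarith
  have hcauchy : CauchySeq pf := by
    apply cauchySeq_of_le_geometric (1/2 : ℝ) C (by norm_num)
    intro n
    cases n with
    | zero =>
      simpa using le_trans (by linarith [dist_nonneg (x := pf 0) (y := pf 1)]) le_rfl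
    | succ n =>
      have h1 : pf (n+1) ∈ σ.W (bpath b (n+1)) := hpf (n+1)
      have h2 : pf (n+2) ∈ σ.W (bpath b (n+1)) := hmem (by omega)
      have h3 := σ.sml (b n) (bpath b n) _ h1 _ h2
      simp only [bpath_length] at h3
      calc dist (pf (n+1)) (pf (n+2)) ≤ (1/2:ℝ)^n := by
            exact le_trans (by exact h3) le_rfl
      _ = 2 * (1/2:ℝ)^(n+1) := by ring
      _ ≤ C * (1/2:ℝ)^(n+1) := by
            have : (0:ℝ) < (1/2:ℝ)^(n+1) := by positivity
            nlinarith
  obtain ⟨x, hxlim⟩ := cauchySeq_tendsto_of_complete hcauchy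
  refine ⟨x, fun n => ?_⟩
  apply mem_closure_of_tendsto hxlim
  filter_upwards [Filter.eventually_ge_atTop n] with m hm
  exact hmem hm

lemma MyScheme.point_in_coset (σ : MyScheme M) {C : Set (ℕ → ℕ)} {b : ℕ → ℕ} (hb : b ∈ C)
    {x : M} (hx : ∀ n, x ∈ closure (σ.W (bpath b n))) : x ∈ σ.coset C := by
  constructor
  · exact hx 0
  · intro hmem
    obtain ⟨s, hs⟩ := mem_iUnion.mp hmem
    obtain ⟨hcylC, hxs⟩ := mem_iUnion.mp hs
    have hne : (σ.W s ∩ σ.W (bpath b s.length)).Nonempty := by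
      have hcl := hx s.length
      rw [_root_.mem_closure_iff] at hcl
      exact hcl _ (σ.op s) hxs
    have heq : s = bpath b s.length := by
      by_contra hne'
      rw [σ.levdisj s (bpath b s.length) (by simp) hne'] at hne
      exact absurd hne not_nonempty_empty
    have hthis : b ∈ cylSet s := by rw [heq]; exact mem_cylSet_bpath b s.length
    have hbmem : b ∈ cylSet s ∩ C := ⟨hthis, hb⟩
    rw [hcylC] at hbmem
    exact absurd hbmem (notMem_empty b)

section Helpers

variable {Y : Type*} [TopologicalSpace Y]

lemma IsNowhereDense.isMeagre' {s : Set Y} (h : IsNowhereDense s) : IsMeagre s :=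
  isMeagre_iff_countable_union_isNowhereDense.mpr
    ⟨{s}, by simpa using h, countable_singleton s, by simp⟩

lemma IsMeagre.union' {s t : Set Y} (hs : IsMeagre s) (ht : IsMeagre t) :
    IsMeagre (s ∪ t) := by
  rw [IsMeagre, compl_union]
  exact Filter.inter_mem hs ht

lemma isMeagre_iUnion' {ι : Type*} [Countable ι] (f : ι → Set Y)
    (h : ∀ i, IsMeagre (f i)) : IsMeagre (⋃ i, f i) := by
  rcases isEmpty_or_nonempty ι with hι | hι
  · rw [iUnion_of_empty]
    exact IsMeagre.empty
  · obtain ⟨g, hg⟩ := exists_surjective_nat ι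
    rw [← hg.iUnion_comp f]
    exact isMeagre_iUnion (fun n => h (g n))

lemma exists_closed_nwd_cover {s : Set Y} (h : IsMeagre s) :
    ∃ N : ℕ → Set Y, (∀ k, IsClosed (N k) ∧ IsNowhereDense (N k)) ∧ s ⊆ ⋃ k, N k := by
  obtain ⟨S, hS1, hS2, hS3⟩ := isMeagre_iff_countable_union_isNowhereDense.mp h
  rcases S.eq_empty_or_nonempty with rfl | hne
  · exact ⟨fun _ => ∅, fun k => ⟨isClosed_empty, isNowhereDense_empty⟩, by simpa using hS3⟩
  · obtain ⟨f, hf⟩ := hS2.exists_eq_range hne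
    refine ⟨fun k => closure (f k), fun k => ⟨isClosed_closure, ?_⟩, ?_⟩
    · exact (hS1 (f k) (by rw [hf]; exact mem_range_self k)).closure
    · refine hS3.trans ?_
      rw [hf, sUnion_range]
      exact iUnion_mono (fun k => subset_closure)

end Helpers

lemma real_not_isolated : ∀ x ∈ (univ : Set ℝ), ¬IsOpen ({x} : Set ℝ) := by
  intro x _ h
  obtain ⟨ε, hε, hball⟩ := Metric.isOpen_iff.mp h x rfl
  have hmem : x + ε/2 ∈ ball x ε := by
    rw [mem_ball, Real.dist_eq]
    rw [show x + ε/2 - x = ε/2 by ring, abs_of_pos (by linarith)]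
    linarith
  have := hball hmem
  rw [mem_singleton_iff] at this
  linarith [congrArg (fun y => y - x) this]

open Cardinal

theorem union_meagre_of_card_lt_add_meagre
    {X : Type u} [TopologicalSpace X] [TopologicalSpace.MetrizableSpace X]
    [TopologicalSpace.SeparableSpace X]
    (𝒜 : Set (Set X)) (h𝒜 : ∀ A ∈ 𝒜, IsMeagre A)
    (hcard : Cardinal.lift.{0} (#𝒜) <
      Cardinal.lift.{u} (sInf {c : Cardinal.{0} | ∃ ℬ : Set (Set ℝ),
        #ℬ = c ∧ (∀ B ∈ ℬ, IsMeagre B) ∧ ¬ IsMeagre (⋃₀ ℬ)})) :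
    IsMeagre (⋃₀ 𝒜) := by
  classical
  letI : MetricSpace X := TopologicalSpace.metrizableSpaceMetric X
  set I : Set X := {x | IsOpen ({x} : Set X)} with hIdef
  have hIopen : IsOpen I := by
    have : I = ⋃ x ∈ I, {x} := by
      ext y
      simp only [mem_iUnion, mem_singleton_iff]
      exact ⟨fun hy => ⟨y, hy, rfl⟩, fun ⟨z, hz, hyz⟩ => hyz ▸ hz⟩
    rw [this]
    exact isOpen_biUnion (fun x hx => hx)
  have hmeag_I : ∀ A ∈ 𝒜, A ∩ I = ∅ := by
    intro A hA
    rw [eq_empty_iff_forall_notMem]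
    rintro x ⟨hxA, hxI⟩
    have hm : IsMeagre ({x} : Set X) := (h𝒜 A hA).mono (singleton_subset_iff.mpr hxA)
    obtain ⟨S, hS1, _, hS3⟩ := isMeagre_iff_countable_union_isNowhereDense.mp hm
    obtain ⟨t, htS, hxt⟩ := hS3 rfl
    have : ({x} : Set X) ⊆ interior (closure t) :=
      interior_maximal (singleton_subset_iff.mpr (subset_closure hxt)) hxI
    rw [hS1 t htS] at this
    exact (this rfl)
  have hclI : IsNowhereDense (closure I \ I) := by
    have hcl : IsClosed (closure I \ I) := isClosed_closure.inter hIopen.isClosed_compl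
    rw [hcl.isNowhereDense_iff]
    rw [eq_empty_iff_forall_notMem]
    intro x hx
    have hx1 : x ∈ closure I := (interior_subset hx).1
    rw [_root_.mem_closure_iff] at hx1
    obtain ⟨y, hy1, hy2⟩ := hx1 _ isOpen_interior hx
    exact (interior_subset hy1).2 hy2
  set U₀ : Set X := (closure I)ᶜ with hU₀def
  have hsplit : ⋃₀ 𝒜 ⊆ (closure I \ I) ∪ (⋃₀ 𝒜 ∩ U₀) := by
    intro x hx
    by_cases h : x ∈ closure I
    · left
      refine ⟨h, fun hxI => ?_⟩
      obtain ⟨A, hA, hxA⟩ := hx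
      have : x ∈ A ∩ I := ⟨hxA, hxI⟩
      rw [hmeag_I A hA] at this
      exact this
    · exact Or.inr ⟨hx, h⟩
  by_cases hU₀ : U₀.Nonempty
  swap
  · rw [not_nonempty_iff_eq_empty] at hU₀
    apply IsMeagre.mono ?_ hclI.isMeagre'
    intro x hx
    rcases hsplit hx with h | h
    · exact h
    · exact absurd (show x ∈ U₀ from h.2) (by rw [hU₀]; exact notMem_empty x)
  have hiso₀ : ∀ x ∈ U₀, ¬IsOpen ({x} : Set X) := by
    intro x hxU hop
    exact hxU (subset_closure hop)
  obtain ⟨σ, hσroot⟩ := scheme_exists U₀ (isOpen_compl_iff.mpr isClosed_closure) hU₀ hiso₀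
  obtain ⟨ρ, hρroot⟩ := scheme_exists (univ : Set ℝ) isOpen_univ ⟨0, trivial⟩ real_not_isolated
  have hcov : ∀ A : ↥𝒜, ∃ N : ℕ → Set X,
      (∀ k, IsClosed (N k) ∧ IsNowhereDense (N k)) ∧ (A : Set X) ⊆ ⋃ k, N k :=
    fun A => exists_closed_nwd_cover (h𝒜 A A.2)
  choose N hN1 hN2 using hcov
  set Bfun : ↥𝒜 → Set ℝ := fun A => ⋃ k, ρ.coset (σ.tree (N A k)) with hBdef
  have hBmeag : ∀ A, IsMeagre (Bfun A) := fun A =>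
    isMeagre_iUnion (fun k =>
      (ρ.coset_nwd (σ.tree_tnwd (hN1 A k).1 (hN1 A k).2)).isMeagre')
  have hUB : IsMeagre (⋃ A : ↥𝒜, Bfun A) := by
    by_contra hB
    have hmem : #↥(Set.range Bfun) ∈ {c : Cardinal.{0} | ∃ ℬ : Set (Set ℝ),
        #ℬ = c ∧ (∀ B ∈ ℬ, IsMeagre B) ∧ ¬ IsMeagre (⋃₀ ℬ)} := by
      refine ⟨Set.range Bfun, rfl, ?_, ?_⟩
      · rintro B ⟨A, rfl⟩
        exact hBmeag A
      · rwa [Set.sUnion_range]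
    have h1 : sInf {c : Cardinal.{0} | ∃ ℬ : Set (Set ℝ),
        #ℬ = c ∧ (∀ B ∈ ℬ, IsMeagre B) ∧ ¬ IsMeagre (⋃₀ ℬ)} ≤ #↥(Set.range Bfun) :=
      csInf_le' hmem
    have h2 : Cardinal.lift.{u} (#↥(Set.range Bfun)) ≤ Cardinal.lift.{0} (#↥𝒜) :=
      Cardinal.mk_range_le_lift
    have h3 := (Cardinal.lift_le.mpr h1).trans h2
    exact absurd (h3.trans_lt hcard) (lt_irrefl _)
  obtain ⟨Dm, hDm1, hDm2⟩ := exists_closed_nwd_cover hUB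
  have hfinal : ⋃₀ 𝒜 ⊆ (closure I \ I) ∪
      ((⋃ m, σ.coset (ρ.tree (Dm m))) ∪ ⋃ s : List ℕ, σ.junk s) := by
    intro x hx
    obtain ⟨A, hA𝒜, hxA⟩ := hx
    by_cases hcl : x ∈ closure I
    · left
      refine ⟨hcl, fun hxI => ?_⟩
      have : x ∈ A ∩ I := ⟨hxA, hxI⟩
      rw [hmeag_I A hA𝒜] at this
      exact this
    right
    have hxU₀ : x ∈ σ.W [] := by rw [hσroot]; exact hcl
    rcases σ.branch_or_junk x hxU₀ with ⟨b, hb⟩ | ⟨s, hs⟩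
    · obtain ⟨k, hk⟩ := mem_iUnion.mp (hN2 ⟨A, hA𝒜⟩ hxA)
      have hbtree : b ∈ σ.tree (N ⟨A, hA𝒜⟩ k) := fun n => ⟨x, subset_closure (hb n), hk⟩
      obtain ⟨z, hz⟩ := ρ.limit_point b
      have hzcoset : z ∈ ρ.coset (σ.tree (N ⟨A, hA𝒜⟩ k)) := ρ.point_in_coset hbtree hz
      have hzB : z ∈ ⋃ A : ↥𝒜, Bfun A :=
        mem_iUnion.mpr ⟨⟨A, hA𝒜⟩, mem_iUnion.mpr ⟨k, hzcoset⟩⟩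
      obtain ⟨m, hm⟩ := mem_iUnion.mp (hDm2 hzB)
      have hbC : b ∈ ρ.tree (Dm m) := fun n => ⟨z, hz n, hm⟩
      left
      refine mem_iUnion.mpr ⟨m, subset_closure hxU₀, fun hmem => ?_⟩
      obtain ⟨s, hs⟩ := mem_iUnion.mp hmem
      obtain ⟨hcyl, hxs⟩ := mem_iUnion.mp hs
      have heq : s = bpath b s.length := σ.branch_prefix hxs hb
      have hbcyl : b ∈ cylSet s := by rw [heq]; exact mem_cylSet_bpath b s.length
      have hbmem : b ∈ cylSet s ∩ ρ.tree (Dm m) := ⟨hbcyl, hbC⟩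
      rw [hcyl] at hbmem
      exact absurd hbmem (notMem_empty b)
    · exact Or.inr (mem_iUnion.mpr ⟨s, hs⟩)
  have m1 : IsMeagre (closure I \ I) := hclI.isMeagre'
  have m2 : IsMeagre (⋃ m, σ.coset (ρ.tree (Dm m))) :=
    isMeagre_iUnion (fun m => (σ.coset_nwd (ρ.tree_tnwd (hDm1 m).1 (hDm1 m).2)).isMeagre')
  have m3 : IsMeagre (⋃ s : List ℕ, σ.junk s) :=
    isMeagre_iUnion' _ (fun s => (σ.junk_nwd s).isMeagre')
  exact (m1.union' (m2.union' m3)).mono hfinal
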